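/- Period-0 inflation is strictly increasing in the amount of government debt when the Taylor-rule intercept is fixed at the natural rate (Proposition 4): suppose 0 ≤ b̄ < bmax, r* > −1, Dh(b̄, r*) > 0, Dl(b̄, r*) > 0 and F(b̄, r*) = 0 (i.e., r* is the natural rate at debt level b̄). Let h : ℝ → ℝ be differentiable at b̄ with h(b̄) = 1, and suppose there is an open interval U containing b̄ such that G(b, h(b)) = 0 for all b ∈ U. Then the derivative of h at b̄ is strictly positive. -/

import Mathlib

set_option maxHeartbeats 1000000


/-- High-productivity stationary consumption denominator:
Dh(b,r) = w·zh + (1−β)·(1+r)·b·(1−zh) with w = (ε−1)/ε. -/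
noncomputable def Dh (β ε zh : ℝ) (b r : ℝ) : ℝ :=
  ((ε - 1) / ε) * zh + (1 - β) * (1 + r) * b * (1 - zh)

/-- Low-productivity stationary consumption denominator:
Dl(b,r) = w·zl + (1−β)·(1+r)·b·(1−zl) with w = (ε−1)/ε. -/
noncomputable def Dl (β ε zl : ℝ) (b r : ℝ) : ℝ :=
  ((ε - 1) / ε) * zl + (1 - β) * (1 + r) * b * (1 - zl)

/-- Natural-rate equation residual:
F(b,r) = β·ρ·(1+r)/Dh(b,r) + β·(1−ρ)·(1+r)/Dl(b,r) − ε/(ε−1). -/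
noncomputable def F (β ε ρ zh zl : ℝ) (b r : ℝ) : ℝ :=
  β * ρ * (1 + r) / Dh β ε zh b r
    + β * (1 - ρ) * (1 + r) / Dl β ε zl b r
    - ε / (ε - 1)

/-- Period-0 equilibrium residual under the Taylor rule:
G(b,π) = β·ρ·(1+r*+θ(π−1))/Dh(b,r*+θ(π−1)) + β·(1−ρ)·(1+r*+θ(π−1))/Dl(b,r*+θ(π−1))
        − ε/(ε−1+φ(π−1)π). -/
noncomputable def G (β ε ρ zh zl θ φ rstar : ℝ) (b π : ℝ) : ℝ :=
  β * ρ * (1 + rstar + θ * (π - 1)) / Dh β ε zh b (rstar + θ * (π - 1))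
    + β * (1 - ρ) * (1 + rstar + θ * (π - 1)) / Dl β ε zl b (rstar + θ * (π - 1))
    - ε / (ε - 1 + φ * (π - 1) * π)

/-- Auxiliary: the natural rate is at most the steady-state rate (β(1+r*) ≤ 1). -/
lemma aux_rate_le (β ε ρ rstar DH DL w : ℝ)
    (hρ0 : 0 < ρ) (hρ1' : 0 < 1-ρ)
    (hε1 : (0:ℝ) < ε - 1) (hεw : w * ε = ε - 1)
    (hDH : 0 < DH) (hDL : 0 < DL)
    (h0 : β*ρ*(1+rstar)/DH + β*(1-ρ)*(1+rstar)/DL - ε/(ε-1) = 0)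
    (hsum : ρ*DH + (1-ρ)*DL = w) :
    β*(1+rstar) ≤ 1 := by
  have hεpos : (0:ℝ) < ε := by linarith
  have h1 : β*ρ*(1+rstar)*DL*(ε-1) + β*(1-ρ)*(1+rstar)*DH*(ε-1) = DH*DL*ε := by
    field_simp at h0
    linarith [h0]
  have h2' : β*(1+rstar)*((ρ*DL+(1-ρ)*DH)*(ρ*DH+(1-ρ)*DL))*ε = DH*DL*ε := by
    rw [hsum]
    linear_combination h1 + β*(1+rstar)*(ρ*DL+(1-ρ)*DH)*hεw
  have h2 : β*(1+rstar)*((ρ*DL+(1-ρ)*DH)*(ρ*DH+(1-ρ)*DL)) = DH*DL :=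
    mul_right_cancel₀ hεpos.ne' h2'
  have hS : 0 < ρ*DL+(1-ρ)*DH := add_pos (mul_pos hρ0 hDL) (mul_pos hρ1' hDH)
  have hT : 0 < ρ*DH+(1-ρ)*DL := add_pos (mul_pos hρ0 hDH) (mul_pos hρ1' hDL)
  have hX : DH*DL ≤ (ρ*DL+(1-ρ)*DH)*(ρ*DH+(1-ρ)*DL) := by
    nlinarith [mul_nonneg (mul_pos hρ0 hρ1').le (sq_nonneg (DH-DL))]
  by_contra hcon
  push_neg at hcon
  nlinarith [mul_pos (sub_pos.mpr hcon) (mul_pos hS hT)]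

/-- Proposition 4: period-0 inflation is strictly increasing in the amount of
government debt when the Taylor-rule intercept is fixed at the natural rate:
if h locally solves G(b, h(b)) = 0 around b̄ with h(b̄) = 1 and h is
differentiable at b̄, then h'(b̄) > 0. -/
theorem stmt_16 (β ε ρ zh zl θ φ rstar : ℝ)
    (hβ0 : 0 < β) (hβ1 : β < 1) (hε : 1 < ε)
    (hρ0 : 0 < ρ) (hρ1 : ρ < 1)
    (hzl0 : 0 < zl) (hzl1 : zl < 1) (hzh : 1 < zh)
    (hmean : ρ * zh + (1 - ρ) * zl = 1)
    (hθ : 0 < θ) (hφ : 0 < φ)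
    (bbar : ℝ) (hb0 : 0 ≤ bbar)
    (hb1 : bbar < ((ε - 1) / ε) * (β / (1 - β)))
    (hr : rstar > -1)
    (hDh : Dh β ε zh bbar rstar > 0) (hDl : Dl β ε zl bbar rstar > 0)
    (hF : F β ε ρ zh zl bbar rstar = 0)
    (h : ℝ → ℝ) (hdiff : DifferentiableAt ℝ h bbar) (hone : h bbar = 1)
    (lo hi : ℝ) (hlo : lo < bbar) (hhi : bbar < hi)
    (hsol : ∀ b ∈ Set.Ioo lo hi, G β ε ρ zh zl θ φ rstar b (h b) = 0) :
    0 < deriv h bbar := by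
  have hεpos : (0:ℝ) < ε := by linarith
  have hε1 : (0:ℝ) < ε - 1 := by linarith
  have hw : 0 < (ε-1)/ε := div_pos hε1 hεpos
  have hcβ : 0 < 1 - β := by linarith
  have hu : 0 < 1 + rstar := by linarith
  have hρ1' : (0:ℝ) < 1 - ρ := by linarith
  have hDH : 0 < ((ε-1)/ε)*zh + (1-β)*(1+rstar)*bbar*(1-zh) := hDh
  have hDL : 0 < ((ε-1)/ε)*zl + (1-β)*(1+rstar)*bbar*(1-zl) := hDl
  -- β(1+r*) ≤ 1
  have hβu : β*(1+rstar) ≤ 1 := by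
    have hF' := hF
    unfold F Dh Dl at hF'
    refine aux_rate_le β ε ρ rstar _ _ ((ε-1)/ε) hρ0 hρ1' hε1 (by field_simp) hDH hDL hF' ?_
    linear_combination ((ε-1)/ε - (1-β)*(1+rstar)*bbar) * hmean
  -- w − (1−β)(1+r*)b̄ > 0
  have hb1' : bbar*(1-β) < ((ε-1)/ε)*β := by
    have := mul_lt_mul_of_pos_right hb1 hcβ
    rwa [show ((ε-1)/ε)*(β/(1-β))*(1-β) = ((ε-1)/ε)*β by field_simp] at this
  have hx : 0 < (ε-1)/ε - (1-β)*(1+rstar)*bbar := by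
    by_contra hc
    push_neg at hc
    nlinarith [mul_le_mul_of_nonneg_right hβu (mul_nonneg hcβ.le hb0),
      mul_nonneg hβ0.le (by linarith : (0:ℝ) ≤ (1-β)*(1+rstar)*bbar - (ε-1)/ε)]
  -- DL < DH
  have hDLDH : ((ε-1)/ε)*zl + (1-β)*(1+rstar)*bbar*(1-zl)
      < ((ε-1)/ε)*zh + (1-β)*(1+rstar)*bbar*(1-zh) := by
    nlinarith [mul_pos (show (0:ℝ) < zh - zl by linarith) hx]
  -- the implicit derivative
  set d := deriv h bbar with hd
  have hh : HasDerivAt h d bbar := hdiff.hasDerivAt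
  have hR : HasDerivAt (fun b => rstar + θ * (h b - 1)) (θ * d) bbar := by
    simpa using ((hh.sub_const 1).const_mul θ).const_add rstar
  have hN : HasDerivAt (fun b => 1 + (rstar + θ * (h b - 1))) (θ * d) bbar :=
    hR.const_add 1
  have hnum1 : HasDerivAt (fun b => (β*ρ) * (1 + (rstar + θ * (h b - 1))))
      (β*ρ*(θ*d)) bbar := hN.const_mul (β*ρ)
  have hnum2 : HasDerivAt (fun b => (β*(1-ρ)) * (1 + (rstar + θ * (h b - 1))))
      (β*(1-ρ)*(θ*d)) bbar := hN.const_mul (β*(1-ρ))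
  have hden1 : HasDerivAt
      (fun b => ((ε-1)/ε)*zh + (1-β) * ((1 + (rstar + θ * (h b - 1))) * b) * (1-zh))
      ((1-β) * (θ*d*bbar + (1 + (rstar + θ * (h bbar - 1))) * 1) * (1-zh)) bbar :=
    (((hN.mul (hasDerivAt_id bbar)).const_mul (1-β)).mul_const (1-zh)).const_add (((ε-1)/ε)*zh)
  have hden2 : HasDerivAt
      (fun b => ((ε-1)/ε)*zl + (1-β) * ((1 + (rstar + θ * (h b - 1))) * b) * (1-zl))
      ((1-β) * (θ*d*bbar + (1 + (rstar + θ * (h bbar - 1))) * 1) * (1-zl)) bbar :=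
    (((hN.mul (hasDerivAt_id bbar)).const_mul (1-β)).mul_const (1-zl)).const_add (((ε-1)/ε)*zl)
  have hden1ne : (fun b => ((ε-1)/ε)*zh + (1-β) * ((1 + (rstar + θ * (h b - 1))) * b) * (1-zh)) bbar ≠ 0 := by
    simp only [hone]; norm_num
    intro hc; exact hDH.ne' (by linear_combination hc)
  have hden2ne : (fun b => ((ε-1)/ε)*zl + (1-β) * ((1 + (rstar + θ * (h b - 1))) * b) * (1-zl)) bbar ≠ 0 := by
    simp only [hone]; norm_num
    intro hc; exact hDL.ne' (by linear_combination hc)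
  have hden3 : HasDerivAt (fun b => (ε - 1) + φ * ((h b - 1) * h b))
      (φ * (d * h bbar + (h bbar - 1) * d)) bbar :=
    (((hh.sub_const 1).mul hh).const_mul φ).const_add (ε-1)
  have hden3ne : (fun b => (ε - 1) + φ * ((h b - 1) * h b)) bbar ≠ 0 := by
    simp only [hone]; simpa using hε1.ne'
  have ht1 := hnum1.div hden1 hden1ne
  have ht2 := hnum2.div hden2 hden2ne
  have ht3 := (hasDerivAt_const bbar ε).div hden3 hden3ne
  have hgpre := (ht1.add ht2).sub ht3
  have hg : HasDerivAt (fun b => G β ε ρ zh zl θ φ rstar b (h b))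
      ( d * (β*ρ*θ*((ε-1)/ε)*zh/(((ε-1)/ε)*zh + (1-β)*(1+rstar)*bbar*(1-zh))^2
            + β*(1-ρ)*θ*((ε-1)/ε)*zl/(((ε-1)/ε)*zl + (1-β)*(1+rstar)*bbar*(1-zl))^2
            + ε*φ/(ε-1)^2)
        + (β*ρ*(1-β)*(1+rstar)^2*(zh-1)/(((ε-1)/ε)*zh + (1-β)*(1+rstar)*bbar*(1-zh))^2
            + β*(1-ρ)*(1-β)*(1+rstar)^2*(zl-1)/(((ε-1)/ε)*zl + (1-β)*(1+rstar)*bbar*(1-zl))^2) )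
      bbar := by
    refine (hgpre.congr_of_eventuallyEq ?_).congr_deriv ?_
    · exact Filter.Eventually.of_forall fun b => by simp only [G, Dh, Dl, Pi.add_apply, Pi.sub_apply, Pi.div_apply]; ring
    · simp only [hone]; ring
  -- the composite function vanishes near b̄, so its derivative vanishes
  have hev : (fun b => G β ε ρ zh zl θ φ rstar b (h b)) =ᶠ[nhds bbar] (fun _ => (0:ℝ)) := by
    filter_upwards [Ioo_mem_nhds hlo hhi] with b hb using hsol b hb
  have hE0 : d * (β*ρ*θ*((ε-1)/ε)*zh/(((ε-1)/ε)*zh + (1-β)*(1+rstar)*bbar*(1-zh))^2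
            + β*(1-ρ)*θ*((ε-1)/ε)*zl/(((ε-1)/ε)*zl + (1-β)*(1+rstar)*bbar*(1-zl))^2
            + ε*φ/(ε-1)^2)
        + (β*ρ*(1-β)*(1+rstar)^2*(zh-1)/(((ε-1)/ε)*zh + (1-β)*(1+rstar)*bbar*(1-zh))^2
            + β*(1-ρ)*(1-β)*(1+rstar)^2*(zl-1)/(((ε-1)/ε)*zl + (1-β)*(1+rstar)*bbar*(1-zl))^2)
      = 0 := by
    have h1 := hg.deriv
    rw [hev.deriv_eq] at h1
    simpa using h1.symm
  clear hgpre hg ht1 ht2 ht3 hden1 hden2 hden3 hden1ne hden2ne hden3ne hnum1 hnum2 hN hR hev hh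
  set A := ((ε-1)/ε)*zh + (1-β)*(1+rstar)*bbar*(1-zh) with hA
  set B := ((ε-1)/ε)*zl + (1-β)*(1+rstar)*bbar*(1-zl) with hB
  clear_value A B
  -- positivity of the coefficient of d
  have hq : 0 < β*ρ*θ*((ε-1)/ε)*zh/A^2 + β*(1-ρ)*θ*((ε-1)/ε)*zl/B^2 + ε*φ/(ε-1)^2 := by
    have t1 : 0 < β*ρ*θ*((ε-1)/ε)*zh := by positivity
    have t2 : 0 < β*(1-ρ)*θ*((ε-1)/ε)*zl := by positivity
    have t3 : 0 < ε*φ := by positivity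
    exact add_pos (add_pos (div_pos t1 (pow_pos hDH 2)) (div_pos t2 (pow_pos hDL 2)))
      (div_pos t3 (pow_pos hε1 2))
  -- negativity of the constant term
  have hmm : (1-ρ)*(1-zl) = ρ*(zh-1) := by linear_combination (-1) * hmean
  have hfrac : (1:ℝ)/A^2 < 1/B^2 :=
    one_div_lt_one_div_of_lt (pow_pos hDL 2) (by nlinarith [hDL, hDLDH])
  have hKm : 0 < β*(1-β)*(1+rstar)^2*(ρ*(zh-1)) :=
    mul_pos (mul_pos (mul_pos hβ0 hcβ) (pow_pos hu 2))
      (mul_pos hρ0 (by linarith : (0:ℝ) < zh-1))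
  have hc : β*ρ*(1-β)*(1+rstar)^2*(zh-1)/A^2 + β*(1-ρ)*(1-β)*(1+rstar)^2*(zl-1)/B^2 < 0 := by
    have heq : β*ρ*(1-β)*(1+rstar)^2*(zh-1)/A^2 + β*(1-ρ)*(1-β)*(1+rstar)^2*(zl-1)/B^2
        = (β*(1-β)*(1+rstar)^2*(ρ*(zh-1))) * (1/A^2 - 1/B^2) := by
      linear_combination (-(β*(1-β)*(1+rstar)^2/B^2)) * hmm
    rw [heq]
    exact mul_neg_of_pos_of_neg hKm (sub_neg.mpr hfrac)
  -- conclude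
  by_contra hdle
  push_neg at hdle
  nlinarith [mul_le_mul_of_nonneg_right hdle hq.le]
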